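/- Let G be a directed graph with a single source-sink pair (s, t), and let τ be a toll vector with negative toll only on a single edge e' = (u, w). Suppose the Wardrop equilibrium flow g with tolls τ is strictly positive on e', and let E⁺ be a set of edges containing the support of g such that (V, E⁺) is acyclic. Let σ be a topological order of (V, E⁺), S = {x : σ(x) ≤ σ(u)}, and define τ'_{xy} = τ_{xy} − τ_{e'} if x ∈ S and y ∉ S or (x,y) ∉ E⁺, and τ'_{xy} = τ_{xy} otherwise. Then τ' ≥ 0 on edge e', every s-t path's toll increases by at least −τ_{e'}, every path used by g has its toll increased by exactly −τ_{e'}, and consequently g is also the Wardrop equilibrium under tolls τ'. -/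

import Mathlib

private lemma sum_map_sub_mul' {α : Type*} (c : ℝ) (a b : α → ℝ) (p : List α) :
    (p.map fun x => a x - c * b x).sum = (p.map a).sum - c * (p.map b).sum := by
  induction p with
  | nil => simp
  | cons x xs ih => simp [ih]; ring

private lemma map_sum_nonneg' {α : Type*} (f : α → ℝ) (hf : ∀ e, 0 ≤ f e) (p : List α) :
    0 ≤ (p.map f).sum :=
  List.sum_nonneg (fun x hx => by obtain ⟨y, _, rfl⟩ := List.mem_map.mp hx; exact hf y)

private lemma cross_lower {V : Type*} (σ : V → ℕ) (m : ℕ) (f : V × V → ℝ)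
    (hf0 : ∀ e, 0 ≤ f e) (hf1 : ∀ e, ¬(σ e.1 ≤ m ↔ σ e.2 ≤ m) → 1 ≤ f e) :
    ∀ p : List (V × V), List.Chain' (fun e f => e.2 = f.1) p →
      ∀ a b, p.head? = some a → p.getLast? = some b →
      ¬(σ a.1 ≤ m ↔ σ b.2 ≤ m) → 1 ≤ (p.map f).sum
  | [] => by intro _ a b h; simp at h
  | [e] => by
      intro _ a b ha hb hx
      simp only [List.head?_cons, Option.some.injEq] at ha
      simp only [List.getLast?_singleton, Option.some.injEq] at hb
      subst ha; subst hb
      simpa using hf1 e hx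
  | e :: e2 :: rest => by
      intro hch a b ha hb hx
      simp only [List.head?_cons, Option.some.injEq] at ha
      subst ha
      rw [List.getLast?_cons_cons] at hb
      obtain ⟨h12, hch'⟩ := List.isChain_cons_cons.mp hch
      by_cases hmid : σ e2.1 ≤ m ↔ σ b.2 ≤ m
      · have h1 : 1 ≤ f e := by
          apply hf1
          intro hcontra
          rw [h12] at hcontra
          exact hx (hcontra.trans hmid)
        have h2 : 0 ≤ ((e2 :: rest).map f).sum := map_sum_nonneg' f hf0 _
        simp only [List.map_cons, List.sum_cons] at h2 ⊢
        linarith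
      · have h2 : 1 ≤ ((e2 :: rest).map f).sum :=
          cross_lower σ m f hf0 hf1 (e2 :: rest) hch' e2 b rfl hb hmid
        have h1 : 0 ≤ f e := hf0 e
        simp only [List.map_cons, List.sum_cons] at h2 ⊢
        linarith

private lemma cross_upper {V : Type*} (σ : V → ℕ) (m : ℕ) (f : V × V → ℝ) :
    ∀ p : List (V × V), List.Chain' (fun e f => e.2 = f.1) p →
      (∀ e ∈ p, σ e.1 < σ e.2) →
      (∀ e ∈ p, (σ e.1 ≤ m ∧ ¬ σ e.2 ≤ m) → f e = 1) →
      (∀ e ∈ p, ¬(σ e.1 ≤ m ∧ ¬ σ e.2 ≤ m) → f e = 0) →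
      (∀ a, p.head? = some a → ¬ σ a.1 ≤ m → (p.map f).sum = 0) ∧ (p.map f).sum ≤ 1
  | [] => by intro _ _ _ _; constructor <;> simp
  | [e] => by
      intro _ hmono hA hB
      constructor
      · intro a ha hna
        simp only [List.head?_cons, Option.some.injEq] at ha
        subst ha
        simp [hB e (by simp) (fun h => hna h.1)]
      · by_cases h : σ e.1 ≤ m ∧ ¬ σ e.2 ≤ m
        · simp [hA e (by simp) h]
        · simp [hB e (by simp) h]
  | e :: e2 :: rest => by
      intro hch hmono hA hB
      obtain ⟨h12, hch'⟩ := List.isChain_cons_cons.mp hch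
      have hmono' : ∀ x ∈ e2 :: rest, σ x.1 < σ x.2 := fun x hx => hmono x (by simp [hx])
      have hA' : ∀ x ∈ e2 :: rest, (σ x.1 ≤ m ∧ ¬ σ x.2 ≤ m) → f x = 1 :=
        fun x hx => hA x (by simp [hx])
      have hB' : ∀ x ∈ e2 :: rest, ¬(σ x.1 ≤ m ∧ ¬ σ x.2 ≤ m) → f x = 0 :=
        fun x hx => hB x (by simp [hx])
      obtain ⟨ih1, ih2⟩ := cross_upper σ m f (e2 :: rest) hch' hmono' hA' hB'
      have hee : σ e.1 < σ e2.1 := by rw [← h12]; exact hmono e (by simp)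
      constructor
      · intro a ha hna
        simp only [List.head?_cons, Option.some.injEq] at ha
        subst ha
        have htail : ((e2 :: rest).map f).sum = 0 := by
          apply ih1 e2 rfl
          omega
        have hfe : f e = 0 := hB e (by simp) (fun h => hna h.1)
        simp only [List.map_cons, List.sum_cons] at htail ⊢
        linarith [htail, hfe]
      · by_cases h1 : σ e.1 ≤ m
        · by_cases h2 : σ e2.1 ≤ m
          · have hfe : f e = 0 := hB e (by simp) (by rw [h12]; tauto)
            simp only [List.map_cons, List.sum_cons] at ih2 ⊢
            linarith
          · have htail : ((e2 :: rest).map f).sum = 0 := ih1 e2 rfl h2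
            have hfe : f e ≤ 1 := by
              by_cases h : σ e.1 ≤ m ∧ ¬ σ e.2 ≤ m
              · rw [hA e (by simp) h]
              · rw [hB e (by simp) h]; norm_num
            simp only [List.map_cons, List.sum_cons] at htail ⊢
            linarith
        · have htail : ((e2 :: rest).map f).sum = 0 := by
            apply ih1 e2 rfl; omega
          have hfe : f e = 0 := hB e (by simp) (fun h => h1 h.1)
          simp only [List.map_cons, List.sum_cons] at htail ⊢
          linarith

/-- Claim 4.10 (clm:nonnegativetolls). Single-commodity routing game on a directed
graph with edge set `Eset ⊆ V × V`, strictly increasing latencies, and tolls `τ`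
that are negative only on the single edge `e' = (u,w)`. Suppose the Wardrop
equilibrium `g` under `τ` is strictly positive on `e'`, `Eplus` contains the support
of `g` and is acyclic (witnessed by a topological order `σ`), and `τ'` is obtained
from `τ` by adding `−τ_{e'}` to every edge crossing the cut
`S = {x : σ(x) ≤ σ(u)}` forward and to every edge outside `Eplus`. Then `τ'` is
nonnegative on `e'`, every `s`-`t` path's toll increases by at least `−τ_{e'}`,
every path used by `g` has its toll increased by exactly `−τ_{e'}`, and `g` remains
a Wardrop equilibrium under `τ'`. -/
theorem nonnegative_tolls_shift
    {V : Type*} [Fintype V] [DecidableEq V]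
    (Eset Eplus : Finset (V × V)) (hplusE : Eplus ⊆ Eset)
    (s t : V) (hst : s ≠ t) (d : ℝ)
    (l : V × V → ℝ → ℝ) (hl : ∀ e, StrictMono (l e))
    (τ : V × V → ℝ) (e' : V × V) (he'E : e' ∈ Eset)
    (hτneg : τ e' < 0) (hτpos : ∀ e, e ≠ e' → 0 ≤ τ e)
    (g : V × V → ℝ)
    (hg0 : ∀ e, 0 ≤ g e) (hgsupp : ∀ e ∉ Eset, g e = 0)
    (hcons : ∀ v : V, v ≠ s → v ≠ t →
      ∑ e ∈ Eset.filter (fun e => e.2 = v), g e =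
        ∑ e ∈ Eset.filter (fun e => e.1 = v), g e)
    (hval : ∑ e ∈ Eset.filter (fun e => e.1 = s), g e -
        ∑ e ∈ Eset.filter (fun e => e.2 = s), g e = d)
    (hge' : 0 < g e')
    (hsupport : ∀ e ∈ Eset, 0 < g e → e ∈ Eplus)
    (σ : V → ℕ) (hσ : ∀ e ∈ Eplus, σ e.1 < σ e.2)
    (IsPath : List (V × V) → Prop)
    (hIsPath : ∀ p, IsPath p ↔ p ≠ [] ∧ (∀ e ∈ p, e ∈ Eset) ∧
        p.head?.map Prod.fst = some s ∧ p.getLast?.map Prod.snd = some t ∧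
        List.Chain' (fun e f => e.2 = f.1) p)
    -- `g` is a Wardrop equilibrium under tolls `τ`
    (heqm : ∀ p q, IsPath p → IsPath q → (∀ e ∈ p, 0 < g e) →
      (p.map fun e => l e (g e) + τ e).sum ≤ (q.map fun e => l e (g e) + τ e).sum)
    (τ' : V × V → ℝ)
    (hτ' : ∀ e : V × V, τ' e =
      if (σ e.1 ≤ σ e'.1 ∧ ¬ σ e.2 ≤ σ e'.1) ∨ e ∉ Eplus then τ e - τ e' else τ e) :
    0 ≤ τ' e' ∧
    (∀ p, IsPath p → (p.map τ).sum - τ e' ≤ (p.map τ').sum) ∧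
    (∀ p, IsPath p → (∀ e ∈ p, 0 < g e) → (p.map τ').sum = (p.map τ).sum - τ e') ∧
    (∀ p q, IsPath p → IsPath q → (∀ e ∈ p, 0 < g e) →
      (p.map fun e => l e (g e) + τ' e).sum ≤ (q.map fun e => l e (g e) + τ' e).sum) := by
  classical
  set m := σ e'.1 with hm
  have he'plus : e' ∈ Eplus := hsupport e' he'E hge'
  have he'σ : σ e'.1 < σ e'.2 := hσ e' he'plus
  -- the cut lemma: s and t lie on opposite sides of the cut
  have hXOR : ¬ (σ s ≤ m ↔ σ t ≤ m) := by
    intro hiff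
    set Sf : Finset V := Finset.univ.filter (fun v => σ v ≤ m) with hSf
    have hswap : ∀ (T : Finset V),
        ∑ v ∈ T, ((∑ e ∈ Eset.filter (fun e => e.1 = v), g e) -
          ∑ e ∈ Eset.filter (fun e => e.2 = v), g e) =
        ∑ e ∈ Eset, ((if e.1 ∈ T then g e else 0) - (if e.2 ∈ T then g e else 0)) := by
      intro T
      rw [Finset.sum_sub_distrib, Finset.sum_sub_distrib]
      congr 1
      · calc ∑ v ∈ T, ∑ e ∈ Eset.filter (fun e => e.1 = v), g e
            = ∑ v ∈ T, ∑ e ∈ Eset, if e.1 = v then g e else 0 := by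
              simp [Finset.sum_filter]
          _ = ∑ e ∈ Eset, ∑ v ∈ T, if e.1 = v then g e else 0 := Finset.sum_comm
          _ = ∑ e ∈ Eset, if e.1 ∈ T then g e else 0 := by
              refine Finset.sum_congr rfl fun e _ => Finset.sum_ite_eq T e.1 (fun _ => g e)
      · calc ∑ v ∈ T, ∑ e ∈ Eset.filter (fun e => e.2 = v), g e
            = ∑ v ∈ T, ∑ e ∈ Eset, if e.2 = v then g e else 0 := by
              simp [Finset.sum_filter]
          _ = ∑ e ∈ Eset, ∑ v ∈ T, if e.2 = v then g e else 0 := Finset.sum_comm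
          _ = ∑ e ∈ Eset, if e.2 ∈ T then g e else 0 := by
              refine Finset.sum_congr rfl fun e _ => Finset.sum_ite_eq T e.2 (fun _ => g e)
    have hpos : 0 < ∑ v ∈ Sf, ((∑ e ∈ Eset.filter (fun e => e.1 = v), g e) -
        ∑ e ∈ Eset.filter (fun e => e.2 = v), g e) := by
      rw [hswap]
      apply Finset.sum_pos'
      · intro e he
        by_cases h1 : e.1 ∈ Sf <;> by_cases h2 : e.2 ∈ Sf <;> simp [h1, h2, hg0 e]
        -- remaining: e.1 ∉ Sf, e.2 ∈ Sf : need g e ≤ 0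
        · by_contra hne
          push_neg at hne
          have hgpos : 0 < g e := hne
          have := hσ e (hsupport e he hgpos)
          simp [hSf] at h1 h2
          omega
      · refine ⟨e', he'E, ?_⟩
        have h1 : e'.1 ∈ Sf := by simp [hSf]; omega
        have h2 : e'.2 ∉ Sf := by simp [hSf]; omega
        simp [h1, h2, hge']
    have hzero : ∑ v ∈ Sf, ((∑ e ∈ Eset.filter (fun e => e.1 = v), g e) -
        ∑ e ∈ Eset.filter (fun e => e.2 = v), g e) = 0 := by
      by_cases hs : σ s ≤ m
      · have ht : σ t ≤ m := hiff.mp hs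
        have hfull : ∑ v ∈ Sf, ((∑ e ∈ Eset.filter (fun e => e.1 = v), g e) -
            ∑ e ∈ Eset.filter (fun e => e.2 = v), g e) =
            ∑ v ∈ Finset.univ, ((∑ e ∈ Eset.filter (fun e => e.1 = v), g e) -
            ∑ e ∈ Eset.filter (fun e => e.2 = v), g e) := by
          apply Finset.sum_subset (Finset.subset_univ _)
          intro v _ hv
          simp [hSf] at hv
          have hvs : v ≠ s := by intro h; subst h; omega
          have hvt : v ≠ t := by intro h; subst h; omega
          rw [hcons v hvs hvt]; ring
        rw [hfull, Finset.sum_sub_distrib]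
        rw [Finset.sum_fiberwise Eset (fun e => e.1) g,
          Finset.sum_fiberwise Eset (fun e => e.2) g]
        ring
      · have ht : ¬ σ t ≤ m := fun h => hs (hiff.mpr h)
        apply Finset.sum_eq_zero
        intro v hv
        simp [hSf] at hv
        have hvs : v ≠ s := by intro h; subst h; omega
        have hvt : v ≠ t := by intro h; subst h; omega
        rw [hcons v hvs hvt]; ring
    rw [hzero] at hpos
    exact lt_irrefl 0 hpos
  -- the indicator of shifted edges
  set f : V × V → ℝ := fun e =>
    if (σ e.1 ≤ m ∧ ¬ σ e.2 ≤ m) ∨ e ∉ Eplus then 1 else 0 with hfdef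
  have hτ'f : ∀ e, τ' e = τ e - τ e' * f e := by
    intro e
    rw [hτ' e]
    by_cases h : (σ e.1 ≤ m ∧ ¬ σ e.2 ≤ m) ∨ e ∉ Eplus
    · rw [if_pos h, hfdef]; dsimp only; rw [if_pos h]; ring
    · rw [if_neg h, hfdef]; dsimp only; rw [if_neg h]; ring
  have hτ'fun : τ' = fun e => τ e - τ e' * f e := funext hτ'f
  have hf0 : ∀ e, 0 ≤ f e := by
    intro e; rw [hfdef]; dsimp only
    split <;> norm_num
  have hf1 : ∀ e, ¬(σ e.1 ≤ m ↔ σ e.2 ≤ m) → 1 ≤ f e := by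
    intro e he
    rw [hfdef]; dsimp only
    by_cases h1 : σ e.1 ≤ m
    · have h2 : ¬ σ e.2 ≤ m := fun h => he ⟨fun _ => h, fun _ => h1⟩
      rw [if_pos (Or.inl ⟨h1, h2⟩)]
    · have h2 : σ e.2 ≤ m := by
        by_contra h2
        exact he ⟨fun h => absurd h h1, fun h => absurd h h2⟩
      have hnp : e ∉ Eplus := by
        intro hp
        have := hσ e hp
        omega
      rw [if_pos (Or.inr hnp)]
  -- lower bound on f-sum over any path
  have hlow : ∀ p, IsPath p → 1 ≤ (p.map f).sum := by
    intro p hp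
    rw [hIsPath] at hp
    obtain ⟨hne, hE, hh, hlast, hch⟩ := hp
    obtain ⟨a, ha, has⟩ := Option.map_eq_some_iff.mp hh
    obtain ⟨b, hb, hbt⟩ := Option.map_eq_some_iff.mp hlast
    refine cross_lower σ m f hf0 hf1 p hch a b ha hb ?_
    rw [has, hbt]
    exact hXOR
  -- exact value on used paths
  have hexact : ∀ p, IsPath p → (∀ e ∈ p, 0 < g e) → (p.map f).sum = 1 := by
    intro p hp hpos
    have h1 := hlow p hp
    rw [hIsPath] at hp
    obtain ⟨hne, hE, hh, hlast, hch⟩ := hp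
    have hplus : ∀ e ∈ p, e ∈ Eplus := fun e he => hsupport e (hE e he) (hpos e he)
    have h2 := (cross_upper σ m f p hch
      (fun e he => hσ e (hplus e he))
      (fun e he hc => by rw [hfdef]; exact if_pos (Or.inl hc))
      (fun e he hc => by
        rw [hfdef]; dsimp only
        exact if_neg (fun hor => hor.elim hc (fun hn => hn (hplus e he))))).2
    linarith
  have hsumτ' : ∀ p : List (V × V),
      (p.map τ').sum = (p.map τ).sum - τ e' * (p.map f).sum := by
    intro p
    rw [hτ'fun]
    exact sum_map_sub_mul' (τ e') τ f p
  have hmul : ∀ k : ℝ, 1 ≤ k → τ e' * k ≤ τ e' := by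
    intro k hk
    nlinarith
  refine ⟨?_, ?_, ?_, ?_⟩
  · -- τ' e' = 0
    rw [hτ'f e']
    have hfe' : f e' = 1 := by
      rw [hfdef]
      exact if_pos (Or.inl ⟨le_refl _, by omega⟩)
    rw [hfe']
    linarith
  · intro p hp
    rw [hsumτ' p]
    have := hmul _ (hlow p hp)
    linarith
  · intro p hp hpos
    rw [hsumτ' p, hexact p hp hpos]
    ring
  · intro p q hpth hqth hpos
    have hfun : (fun e => l e (g e) + τ' e) =
        fun e => (l e (g e) + τ e) - τ e' * f e := by
      funext e; rw [hτ'f e]; ring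
    rw [hfun]
    rw [sum_map_sub_mul' (τ e') (fun e => l e (g e) + τ e) f p,
      sum_map_sub_mul' (τ e') (fun e => l e (g e) + τ e) f q]
    have h1 := heqm p q hpth hqth hpos
    have h2 : (p.map f).sum = 1 := hexact p hpth hpos
    have h3 := hmul _ (hlow q hqth)
    rw [h2]
    linarith
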